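/- Let b₁,…,bₙ be linearly independent in ℝ^k with Gram–Schmidt vectors b₁*,…,bₙ*. Fix i < n and let B' be the family obtained by swapping bᵢ and b_{i+1}. Then the i-th Gram determinant of B' satisfies det(B'ᵢᵀB'ᵢ)/det(BᵢᵀBᵢ) = (‖b_{i+1}*‖² + μ_{i+1,i}²‖bᵢ*‖²)/‖bᵢ*‖², where μ_{i+1,i} = ⟨b_{i+1}, bᵢ*⟩/⟨bᵢ*, bᵢ*⟩. -/

import Mathlib

open Finset RealInnerProductSpace

noncomputable section

open Matrix


lemma gram_det_eq {k m : ℕ} (v g : Fin m → EuclideanSpace ℝ (Fin k))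
    (U : Matrix (Fin m) (Fin m) ℝ) (hU : U.det = 1)
    (hv : ∀ j, v j = ∑ l, U l j • g l)
    (hg : ∀ a c : Fin m, a ≠ c → ⟪g a, g c⟫ = 0) :
    ((Matrix.of fun r j => v j r)ᵀ * (Matrix.of fun r j => v j r)).det = ∏ j, ‖g j‖ ^ 2 := by
  set M : Matrix (Fin k) (Fin m) ℝ := Matrix.of fun r j => v j r with hMdef
  set G : Matrix (Fin k) (Fin m) ℝ := Matrix.of fun r j => g j r with hGdef
  have hM : M = G * U := by
    ext r j
    simp only [hMdef, hGdef, Matrix.mul_apply, Matrix.of_apply, hv j]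
    rw [WithLp.ofLp_sum, Finset.sum_apply]
    simp [mul_comm]
  have hGG : Gᵀ * G = Matrix.diagonal fun a => ‖g a‖ ^ 2 := by
    ext a c
    have hinner : (Gᵀ * G) a c = ⟪g a, g c⟫ := by
      simp [Matrix.mul_apply, hGdef, PiLp.inner_apply, RCLike.inner_apply, mul_comm]
    by_cases h : a = c
    · subst h
      rw [hinner, Matrix.diagonal_apply_eq, real_inner_self_eq_norm_sq]
    · simp [hinner, Matrix.diagonal_apply_ne _ h, hg a c h]
  rw [hM, Matrix.transpose_mul, Matrix.mul_assoc, ← Matrix.mul_assoc Gᵀ,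
    Matrix.det_mul, Matrix.det_mul, hGG, Matrix.det_transpose, hU,
    Matrix.det_diagonal]
  ring

lemma det_triU {m : ℕ} (c : Fin m → Fin m → ℝ) :
    (Matrix.of fun l j : Fin m => if l = j then (1:ℝ) else if l < j then c l j else 0).det = 1 := by
  rw [Matrix.det_of_upperTriangular]
  · simp
  · intro a b h
    simp only [Matrix.of_apply]
    rw [if_neg, if_neg]
    · exact not_lt_of_gt h
    · exact (ne_of_gt h)

lemma sum_triU {k m : ℕ} (c : Fin m → Fin m → ℝ) (g : Fin m → EuclideanSpace ℝ (Fin k))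
    (j : Fin m) :
    ∑ l, (if l = j then (1:ℝ) else if l < j then c l j else 0) • g l
      = g j + ∑ l ∈ Finset.Iio j, c l j • g l := by
  have h : ∀ l : Fin m, (if l = j then (1:ℝ) else if l < j then c l j else 0) • g l
      = (if l = j then g j else 0) + (if l ∈ Finset.Iio j then c l j • g l else 0) := by
    intro l
    by_cases h1 : l = j
    · subst h1; simp
    · by_cases h2 : l < j <;> simp [h1, h2, Finset.mem_Iio]
  simp only [h]
  rw [Finset.sum_add_distrib, Finset.sum_ite_eq' Finset.univ j, Finset.sum_ite_mem,
    Finset.univ_inter]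
  simp

lemma Iio_castLE {n m : ℕ} (hm : m ≤ n) (j : Fin m) :
    Finset.Iio (Fin.castLE hm j) = (Finset.Iio j).map (Fin.castLEEmb hm) := by
  ext x
  simp only [Finset.mem_Iio, Finset.mem_map, Fin.lt_def, Fin.coe_castLE, Fin.castLEEmb_apply]
  constructor
  · intro hx
    exact ⟨⟨x.1, lt_trans hx j.2⟩, hx, by simp [Fin.ext_iff]⟩
  · rintro ⟨a, ha, rfl⟩
    simpa using ha


instance (n : ℕ) : WellFoundedLT (Fin n) := Finite.to_wellFoundedLT

/-- the matrix of the first \`m\` columns -/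
def seg (k n : ℕ) (b : Fin n → EuclideanSpace ℝ (Fin k)) (m : ℕ) (hm : m ≤ n) :
    Matrix (Fin k) (Fin m) ℝ :=
  Matrix.of fun r j => b (Fin.castLE hm j) r

/-- the size of a basis: the product of the Gram determinants of all initial segments -/
def S (k n : ℕ) (b : Fin n → EuclideanSpace ℝ (Fin k)) : ℝ :=
  ∏ i : Fin n, ((seg k n b (i + 1) i.isLt).transpose * seg k n b (i + 1) i.isLt).det

theorem stmt10 (k n : ℕ) (b : Fin n → EuclideanSpace ℝ (Fin k))
    (hb : LinearIndependent ℝ b)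
    (i : ℕ) (hi : i + 1 < n)
    (gs : Fin n → EuclideanSpace ℝ (Fin k)) (hgs : gs = InnerProductSpace.gramSchmidt ℝ b)
    (μ : ℝ)
    (hμ : μ = ⟪b ⟨i + 1, hi⟩, gs ⟨i, Nat.lt_of_succ_lt hi⟩⟫ /
      ⟪gs ⟨i, Nat.lt_of_succ_lt hi⟩, gs ⟨i, Nat.lt_of_succ_lt hi⟩⟫)
    (b' : Fin n → EuclideanSpace ℝ (Fin k))
    (hb' : b' = b ∘ Equiv.swap ⟨i, Nat.lt_of_succ_lt hi⟩ ⟨i + 1, hi⟩) :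
    ((seg k n b' (i + 1) (Nat.lt_of_succ_lt hi)).transpose *
          seg k n b' (i + 1) (Nat.lt_of_succ_lt hi)).det /
        ((seg k n b (i + 1) (Nat.lt_of_succ_lt hi)).transpose *
          seg k n b (i + 1) (Nat.lt_of_succ_lt hi)).det =
      (‖gs ⟨i + 1, hi⟩‖ ^ 2 + μ ^ 2 * ‖gs ⟨i, Nat.lt_of_succ_lt hi⟩‖ ^ 2) /
        ‖gs ⟨i, Nat.lt_of_succ_lt hi⟩‖ ^ 2 := by
  have hm : i + 1 ≤ n := Nat.lt_of_succ_lt hi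
  set ii : Fin n := ⟨i, Nat.lt_of_succ_lt hi⟩ with hii
  set ii1 : Fin n := ⟨i + 1, hi⟩ with hii1
  -- orthogonality of gramSchmidt vectors
  have horth : ∀ a c : Fin n, a ≠ c → ⟪gs a, gs c⟫ = 0 := by
    intro a c h
    rw [hgs]
    exact InnerProductSpace.gramSchmidt_orthogonal ℝ b h
  have hgsne : ∀ a : Fin n, gs a ≠ 0 := by
    intro a; rw [hgs]; exact InnerProductSpace.gramSchmidt_ne_zero a hb
  -- expansion of b in gs
  have hexp : ∀ x : Fin n, b x = gs x + ∑ l ∈ Finset.Iio x,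
      (⟪gs l, b x⟫ / ‖gs l‖ ^ 2) • gs l := by
    intro x
    rw [hgs]
    exact_mod_cast InnerProductSpace.gramSchmidt_def'' ℝ b x
  -- the triangular coefficient matrix for a column family f
  set c : Fin (i+1) → Fin n → ℝ :=
    fun l x => ⟪gs (Fin.castLE hm l), b x⟫ / ‖gs (Fin.castLE hm l)‖ ^ 2 with hc
  -- castLE facts
  have hcast_last : Fin.castLE hm (Fin.last i) = ii := by simp [Fin.ext_iff, hii]
  -- values of b' on the segment
  have hb'lt : ∀ j : Fin (i+1), (j : ℕ) < i → b' (Fin.castLE hm j) = b (Fin.castLE hm j) := by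
    intro j hj
    rw [hb']
    simp only [Function.comp_apply]
    rw [Equiv.swap_apply_of_ne_of_ne]
    · simp [Fin.ext_iff, hii, hii1]; omega
    · simp [Fin.ext_iff, hii, hii1]; omega
  have hb'last : b' (Fin.castLE hm (Fin.last i)) = b ii1 := by
    rw [hb', hcast_last]
    simp
  -- denominator
  have hden : ((seg k n b (i + 1) hm)ᵀ * seg k n b (i + 1) hm).det
      = ∏ j : Fin (i+1), ‖gs (Fin.castLE hm j)‖ ^ 2 := by
    apply gram_det_eq (fun j => b (Fin.castLE hm j)) (fun j => gs (Fin.castLE hm j))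
      (Matrix.of fun l j : Fin (i+1) =>
        if l = j then (1:ℝ) else if l < j then c l (Fin.castLE hm j) else 0)
    · exact det_triU _
    · intro j
      simp only [Matrix.of_apply]
      rw [sum_triU (fun l j' => c l (Fin.castLE hm j')) (fun l => gs (Fin.castLE hm l)) j]
      conv_lhs => rw [hexp (Fin.castLE hm j)]
      rw [Iio_castLE hm j, Finset.sum_map]
      rfl
    · intro a d h
      exact horth _ _ (fun hh => h (Fin.castLE_injective hm hh))
  -- numerator
  set w : EuclideanSpace ℝ (Fin k) := gs ii1 + μ • gs ii with hw
  set gnum : Fin (i+1) → EuclideanSpace ℝ (Fin k) :=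
    fun l => if (l : ℕ) < i then gs (Fin.castLE hm l) else w with hgnum
  have hgnum_lt : ∀ l : Fin (i+1), (l : ℕ) < i → gnum l = gs (Fin.castLE hm l) := by
    intro l hl; simp [hgnum, hl]
  have hgnum_last : gnum (Fin.last i) = w := by simp [hgnum]
  have hnum : ((seg k n b' (i + 1) hm)ᵀ * seg k n b' (i + 1) hm).det
      = ∏ j : Fin (i+1), ‖gnum j‖ ^ 2 := by
    apply gram_det_eq (fun j => b' (Fin.castLE hm j)) gnum
      (Matrix.of fun l j : Fin (i+1) =>
        if l = j then (1:ℝ) else if l < j then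
          ⟪gs (Fin.castLE hm l), b' (Fin.castLE hm j)⟫ / ‖gs (Fin.castLE hm l)‖ ^ 2 else 0)
    · exact det_triU _
    · intro j
      simp only [Matrix.of_apply]
      rw [sum_triU (fun l j' => ⟪gs (Fin.castLE hm l), b' (Fin.castLE hm j')⟫ /
        ‖gs (Fin.castLE hm l)‖ ^ 2) gnum j]
      by_cases hj : (j : ℕ) < i
      · have hlt : ∀ l ∈ Finset.Iio j, gnum l = gs (Fin.castLE hm l) := by
          intro l hl
          have h1 : (l : ℕ) < (j : ℕ) := by
            exact Fin.lt_def.mp (Finset.mem_Iio.mp hl)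
          exact hgnum_lt l (lt_trans h1 hj)
        rw [hgnum_lt j hj, hb'lt j hj]
        conv_lhs => rw [hexp (Fin.castLE hm j)]
        rw [Iio_castLE hm j, Finset.sum_map]
        congr 1
        exact Finset.sum_congr rfl fun l hl => by rw [hlt l hl]; rfl
      · have hj' : j = Fin.last i := by
          have := j.2; simp only [Fin.ext_iff, Fin.last]; omega
        subst hj'
        have hIio : Finset.Iio ii1 = insert ii (Finset.Iio ii) := by
          ext x
          simp only [Finset.mem_Iio, Finset.mem_insert, Fin.lt_def, Fin.ext_iff, hii, hii1]
          omega
        have hii_notmem : ii ∉ Finset.Iio ii := by simp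
        have hμ' : ⟪gs ii, b ii1⟫ / ‖gs ii‖ ^ 2 = μ := by
          rw [hμ, real_inner_comm, real_inner_self_eq_norm_sq]
        have hIio2 : Finset.Iio ii = (Finset.Iio (Fin.last i)).map (Fin.castLEEmb hm) := by
          rw [← hcast_last]; exact Iio_castLE hm (Fin.last i)
        have hrest : ∀ l ∈ Finset.Iio (Fin.last i), gnum l = gs (Fin.castLE hm l) := by
          intro l hl
          have h1 : (l : ℕ) < i := by
            have h2 := Fin.lt_def.mp (Finset.mem_Iio.mp hl); simpa using h2
          exact hgnum_lt l h1
        rw [hb'last, hgnum_last]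
        conv_lhs => rw [hexp ii1]
        rw [hIio, Finset.sum_insert hii_notmem, hμ', hIio2, Finset.sum_map, hw, add_assoc]
        congr 1
        congr 1
        exact Finset.sum_congr rfl fun l hl => by rw [hrest l hl]; rfl
    · -- orthogonality of gnum
      intro a d h
      have key : ∀ l : Fin (i+1), (l : ℕ) < i → ⟪gs (Fin.castLE hm l), w⟫ = 0 := by
        intro l hl
        rw [hw, inner_add_right, real_inner_smul_right,
          horth _ _ (by simp [Fin.ext_iff, hii1]; omega : Fin.castLE hm l ≠ ii1),
          horth _ _ (by simp [Fin.ext_iff, hii]; omega : Fin.castLE hm l ≠ ii)]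
        ring
      by_cases ha : (a : ℕ) < i <;> by_cases hd : (d : ℕ) < i
      · rw [hgnum_lt a ha, hgnum_lt d hd]
        exact horth _ _ (fun hh => h (Fin.castLE_injective hm hh))
      · have : gnum d = w := by simp [hgnum, hd]
        rw [hgnum_lt a ha, this]
        exact key a ha
      · have : gnum a = w := by simp [hgnum, ha]
        rw [hgnum_lt d hd, this, real_inner_comm]
        exact key d hd
      · exfalso
        have h2 := a.2; have h3 := d.2
        exact h (by simp [Fin.ext_iff]; omega)
  -- put it together
  have hwnorm : ‖w‖ ^ 2 = ‖gs ii1‖ ^ 2 + μ ^ 2 * ‖gs ii‖ ^ 2 := by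
    rw [hw, norm_add_sq_real, real_inner_smul_right,
      horth _ _ (by simp [Fin.ext_iff, hii, hii1] : ii1 ≠ ii), norm_smul]
    simp [mul_pow, sq_abs]
  rw [hnum, hden, Fin.prod_univ_castSucc, Fin.prod_univ_castSucc]
  have hcs : ∀ j : Fin i, ((Fin.castSucc j : Fin (i+1)) : ℕ) < i := fun j => j.2
  have hprod_eq : ∀ j : Fin i, ‖gnum (Fin.castSucc j)‖ ^ 2
      = ‖gs (Fin.castLE hm (Fin.castSucc j))‖ ^ 2 := by
    intro j; rw [hgnum_lt _ (hcs j)]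
  simp only [hprod_eq, hgnum_last, hcast_last, hwnorm]
  have hP : (∏ j : Fin i, ‖gs (Fin.castLE hm (Fin.castSucc j))‖ ^ 2) ≠ 0 := by
    apply Finset.prod_ne_zero_iff.mpr
    intro j _
    exact pow_ne_zero _ (norm_ne_zero_iff.mpr (hgsne _))
  rw [mul_div_mul_left _ _ hP]
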